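/- Let A1, A2, A3 be square complex matrices each with norm at most ‖A‖/3. Then for every positive integer n, ‖(exp(A1/n)·exp(A2/n)·exp(A3/n))^n − exp(A1 + A2 + A3)‖ ≤ a/n, where a = ‖A‖²·exp(2‖A‖). -/

import Mathlib

open NormedSpace

open scoped Nat

namespace ZeroCorrAux

variable {𝔸 : Type*} [NormedRing 𝔸] [NormedAlgebra ℂ 𝔸] [CompleteSpace 𝔸]

set_option maxHeartbeats 1000000

lemma real_exp_tsum (t : ℝ) : Real.exp t = ∑' n : ℕ, t ^ n / n ! := by
  rw [Real.exp_eq_exp_ℝ, exp_eq_tsum_div]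

lemma summable_shift (t : ℝ) (k : ℕ) :
    Summable (fun n : ℕ => t ^ (n + k) / (n + k)!) :=
  (summable_nat_add_iff k).2 (Real.summable_pow_div_factorial t)

lemma exp_sub_one_eq (t : ℝ) : Real.exp t - 1 = ∑' n : ℕ, t ^ (n + 1) / (n + 1)! := by
  have h := real_exp_tsum t
  rw [Summable.tsum_eq_zero_add (Real.summable_pow_div_factorial t)] at h
  norm_num at h
  linarith

lemma exp_sub_one_sub_eq (t : ℝ) :
    Real.exp t - 1 - t = ∑' n : ℕ, t ^ (n + 2) / (n + 2)! := by
  have h := exp_sub_one_eq t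
  rw [Summable.tsum_eq_zero_add (summable_shift t 1)] at h
  norm_num at h
  have : (fun n : ℕ => t ^ (n + 1 + 1) / ((n + 1 + 1)! : ℝ)) =
      fun n : ℕ => t ^ (n + 2) / ((n + 2)! : ℝ) := by
    funext n; norm_num
  rw [this] at h
  linarith

lemma exp_sub_one_le (t : ℝ) (ht : 0 ≤ t) : Real.exp t - 1 ≤ t * Real.exp t := by
  have h := Real.add_one_le_exp (-t)
  have hp := Real.exp_pos t
  have h2 : (-t + 1) * Real.exp t ≤ Real.exp (-t) * Real.exp t :=
    mul_le_mul_of_nonneg_right h hp.le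
  rw [← Real.exp_add, neg_add_cancel, Real.exp_zero] at h2
  nlinarith

lemma exp_sub_one_sub_mono {u v : ℝ} (hu : 0 ≤ u) (huv : u ≤ v) :
    Real.exp u - 1 - u ≤ Real.exp v - 1 - v := by
  have h1 : (1:ℝ) ≤ Real.exp u := Real.one_le_exp hu
  have h2 := Real.add_one_le_exp (v - u)
  have h3 : Real.exp v = Real.exp u * Real.exp (v - u) := by
    rw [← Real.exp_add]; ring_nf
  nlinarith

lemma exp_quad_le (t : ℝ) (ht : 0 ≤ t) :
    Real.exp t - 1 - t ≤ t ^ 2 / 2 * Real.exp t := by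
  rw [exp_sub_one_sub_eq]
  have hterm : ∀ n : ℕ, t ^ (n + 2) / (n + 2)! ≤ t ^ 2 / 2 * (t ^ n / n !) := by
    intro n
    have hf : (2 : ℝ) * n ! ≤ ((n + 2)! : ℝ) := by
      have : 2 * n ! ≤ (n + 2)! := by
        have h1 : (n + 2)! = (n + 2) * ((n + 1) * n !) := by
          rw [Nat.factorial_succ, Nat.factorial_succ]
        rw [h1]
        calc 2 * n ! = 2 * (1 * n !) := by ring
          _ ≤ (n + 2) * ((n + 1) * n !) := by
            apply Nat.mul_le_mul (by omega) (Nat.mul_le_mul (by omega) le_rfl)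
      exact_mod_cast this
    have h0 : (0:ℝ) < 2 * n ! := by positivity
    calc t ^ (n + 2) / ((n + 2)! : ℝ) ≤ t ^ (n + 2) / (2 * n !) := by
          apply div_le_div_of_nonneg_left (pow_nonneg ht _) h0 hf
      _ = t ^ 2 / 2 * (t ^ n / n !) := by rw [pow_add]; ring
  calc (∑' n : ℕ, t ^ (n + 2) / (n + 2)!)
      ≤ ∑' n : ℕ, t ^ 2 / 2 * (t ^ n / n !) :=
        Summable.tsum_le_tsum hterm (summable_shift t 2)
          ((Real.summable_pow_div_factorial t).mul_left _)
    _ = t ^ 2 / 2 * Real.exp t := by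
        rw [tsum_mul_left, ← real_exp_tsum]


lemma exp_hasSum (t : ℝ) : HasSum (fun n : ℕ => t ^ n / n !) (Real.exp t) := by
  rw [real_exp_tsum t]; exact (Real.summable_pow_div_factorial t).hasSum

lemma norm_coef (n : ℕ) : ‖((n ! : ℂ))⁻¹‖ = ((n ! : ℝ))⁻¹ := by
  rw [norm_inv, Complex.norm_natCast]

lemma norm_pow_mul_le (x v : 𝔸) (n : ℕ) : ‖x ^ n * v‖ ≤ ‖x‖ ^ n * ‖v‖ := by
  induction n with
  | zero => simp
  | succ n ih =>
      rw [pow_succ', mul_assoc]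
      calc ‖x * (x ^ n * v)‖ ≤ ‖x‖ * ‖x ^ n * v‖ := norm_mul_le _ _
        _ ≤ ‖x‖ * (‖x‖ ^ n * ‖v‖) :=
            mul_le_mul_of_nonneg_left ih (norm_nonneg x)
        _ = ‖x‖ ^ (n + 1) * ‖v‖ := by ring

lemma norm_mul_pow_le (v x : 𝔸) (n : ℕ) : ‖v * x ^ n‖ ≤ ‖v‖ * ‖x‖ ^ n := by
  induction n with
  | zero => simp
  | succ n ih =>
      rw [pow_succ, ← mul_assoc]
      calc ‖v * x ^ n * x‖ ≤ ‖v * x ^ n‖ * ‖x‖ := norm_mul_le _ _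
        _ ≤ ‖v‖ * ‖x‖ ^ n * ‖x‖ :=
            mul_le_mul_of_nonneg_right ih (norm_nonneg x)
        _ = ‖v‖ * ‖x‖ ^ (n + 1) := by ring

lemma norm_exp_mul_le (x v : 𝔸) : ‖exp x * v‖ ≤ Real.exp ‖x‖ * ‖v‖ := by
  have hrw : exp x * v = ∑' n : ℕ, ((n !⁻¹ : ℂ) • x ^ n) * v := by
    rw [exp_eq_tsum ℂ]
    exact ((expSeries_summable' (𝕂 := ℂ) x).tsum_mul_right v).symm
  rw [hrw]
  refine tsum_of_norm_bounded ((exp_hasSum ‖x‖).mul_right ‖v‖) ?_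
  intro n
  calc ‖((n !⁻¹ : ℂ) • x ^ n) * v‖ = ‖((n ! : ℂ))⁻¹‖ * ‖x ^ n * v‖ := by
        rw [smul_mul_assoc, norm_smul]
    _ ≤ ((n ! : ℝ))⁻¹ * (‖x‖ ^ n * ‖v‖) := by
        rw [norm_coef]
        exact mul_le_mul_of_nonneg_left (norm_pow_mul_le x v n) (by positivity)
    _ = ‖x‖ ^ n / n ! * ‖v‖ := by ring

lemma norm_mul_exp_le (v x : 𝔸) : ‖v * exp x‖ ≤ ‖v‖ * Real.exp ‖x‖ := by
  have hrw : v * exp x = ∑' n : ℕ, v * ((n !⁻¹ : ℂ) • x ^ n) := by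
    rw [exp_eq_tsum ℂ]
    exact ((expSeries_summable' (𝕂 := ℂ) x).tsum_mul_left v).symm
  rw [hrw]
  have hs : HasSum (fun n : ℕ => ‖v‖ * (‖x‖ ^ n / n !)) (‖v‖ * Real.exp ‖x‖) :=
    (exp_hasSum ‖x‖).mul_left ‖v‖
  refine tsum_of_norm_bounded hs ?_
  intro n
  calc ‖v * ((n !⁻¹ : ℂ) • x ^ n)‖ = ‖((n ! : ℂ))⁻¹‖ * ‖v * x ^ n‖ := by
        rw [mul_smul_comm, norm_smul]
    _ ≤ ((n ! : ℝ))⁻¹ * (‖v‖ * ‖x‖ ^ n) := by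
        rw [norm_coef]
        exact mul_le_mul_of_nonneg_left (norm_mul_pow_le v x n) (by positivity)
    _ = ‖v‖ * (‖x‖ ^ n / n !) := by ring

lemma norm_exp_sub_one_le (x : 𝔸) : ‖exp x - 1‖ ≤ Real.exp ‖x‖ - 1 := by
  have hsum := expSeries_summable' (𝕂 := ℂ) x
  have hexp : exp x = ∑' n : ℕ, (n !⁻¹ : ℂ) • x ^ n :=
    congrFun (exp_eq_tsum (𝕂 := ℂ)) x
  have h : exp x = 1 + ∑' n : ℕ, ((n + 1)!⁻¹ : ℂ) • x ^ (n + 1) := by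
    rw [hexp, Summable.tsum_eq_zero_add hsum]
    simp only [Nat.factorial_zero, Nat.cast_one, inv_one, pow_zero, one_smul]
  have h2 : exp x - 1 = ∑' n : ℕ, ((n + 1)!⁻¹ : ℂ) • x ^ (n + 1) := by
    rw [h]; abel
  rw [h2]
  have hs : HasSum (fun n : ℕ => ‖x‖ ^ (n + 1) / (n + 1)!) (Real.exp ‖x‖ - 1) := by
    rw [exp_sub_one_eq]
    exact (summable_shift ‖x‖ 1).hasSum
  refine tsum_of_norm_bounded hs ?_
  intro n
  rw [norm_smul, norm_coef]
  calc ((n + 1)! : ℝ)⁻¹ * ‖x ^ (n + 1)‖ ≤ ((n + 1)! : ℝ)⁻¹ * ‖x‖ ^ (n + 1) := by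
        exact mul_le_mul_of_nonneg_left (norm_pow_le' x n.succ_pos) (by positivity)
    _ = ‖x‖ ^ (n + 1) / (n + 1)! := by ring

lemma norm_exp_sub_one_sub_le (x : 𝔸) :
    ‖exp x - 1 - x‖ ≤ Real.exp ‖x‖ - 1 - ‖x‖ := by
  have hsum := expSeries_summable' (𝕂 := ℂ) x
  have hsum1 : Summable (fun n : ℕ => ((n + 1)!⁻¹ : ℂ) • x ^ (n + 1)) :=
    (summable_nat_add_iff 1).2 hsum
  have hexp : exp x = ∑' n : ℕ, (n !⁻¹ : ℂ) • x ^ n :=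
    congrFun (exp_eq_tsum (𝕂 := ℂ)) x
  have h : exp x = 1 + (x + ∑' n : ℕ, ((n + 1 + 1)!⁻¹ : ℂ) • x ^ (n + 1 + 1)) := by
    rw [hexp, Summable.tsum_eq_zero_add hsum, Summable.tsum_eq_zero_add hsum1]
    simp only [Nat.factorial_zero, Nat.cast_one, inv_one, pow_zero, one_smul,
      Nat.factorial_one, pow_one, zero_add]
  have h2 : exp x - 1 - x = ∑' n : ℕ, ((n + 2)!⁻¹ : ℂ) • x ^ (n + 2) := by
    rw [h]; abel
  rw [h2]
  have hs : HasSum (fun n : ℕ => ‖x‖ ^ (n + 2) / (n + 2)!) (Real.exp ‖x‖ - 1 - ‖x‖) := by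
    rw [exp_sub_one_sub_eq]
    exact (summable_shift ‖x‖ 2).hasSum
  refine tsum_of_norm_bounded hs ?_
  intro n
  rw [norm_smul, norm_coef]
  calc ((n + 2)! : ℝ)⁻¹ * ‖x ^ (n + 2)‖ ≤ ((n + 2)! : ℝ)⁻¹ * ‖x‖ ^ (n + 2) := by
        exact mul_le_mul_of_nonneg_left (norm_pow_le' x (by omega)) (by positivity)
    _ = ‖x‖ ^ (n + 2) / (n + 2)! := by ring

lemma ring_identity {A : Type*} [Ring A] (Ex Ey Ez Ew x y z : A) :
    Ex * Ey * Ez - Ew =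
      (Ex - 1 - x) + (Ey - 1 - y) + (Ez - 1 - z) - (Ew - 1 - (x + y + z))
        + (Ex - 1) * (Ey - 1) * Ez + (Ex - 1) * (Ez - 1) + (Ey - 1) * (Ez - 1) := by
  noncomm_ring

lemma real_step {a b c es ea eb ec : ℝ}
    (ha0 : 0 ≤ a) (hb0 : 0 ≤ b) (hc0 : 0 ≤ c)
    (hes : es = ea * eb * ec)
    (q1 : ea - 1 - a ≤ a ^ 2 / 2 * ea) (q2 : eb - 1 - b ≤ b ^ 2 / 2 * eb)
    (q3 : ec - 1 - c ≤ c ^ 2 / 2 * ec)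
    (q4 : es - 1 - (a + b + c) ≤ (a + b + c) ^ 2 / 2 * es)
    (l1 : ea - 1 ≤ a * ea) (l2 : eb - 1 ≤ b * eb) (l3 : ec - 1 ≤ c * ec)
    (p1 : (1:ℝ) ≤ ea) (p2 : (1:ℝ) ≤ eb) (p3 : (1:ℝ) ≤ ec) :
    (ea - 1 - a) + (eb - 1 - b) + (ec - 1 - c) + (es - 1 - (a + b + c))
      + (ea - 1) * (eb - 1) * ec + (ea - 1) * (ec - 1) + (eb - 1) * (ec - 1)
      ≤ (a + b + c) ^ 2 * es := by
  have pa : (0:ℝ) < ea := lt_of_lt_of_le one_pos p1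
  have pb : (0:ℝ) < eb := lt_of_lt_of_le one_pos p2
  have pc : (0:ℝ) < ec := lt_of_lt_of_le one_pos p3
  have hbc : (1:ℝ) ≤ eb * ec := by nlinarith
  have hab : (1:ℝ) ≤ ea * eb := by nlinarith
  have hac : (1:ℝ) ≤ ea * ec := by nlinarith
  have B1 : ea - 1 - a ≤ a ^ 2 / 2 * (ea * eb * ec) := by
    nlinarith [mul_le_mul_of_nonneg_left hbc (show (0:ℝ) ≤ a ^ 2 / 2 * ea by positivity)]
  have B2 : eb - 1 - b ≤ b ^ 2 / 2 * (ea * eb * ec) := by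
    nlinarith [mul_le_mul_of_nonneg_left hac (show (0:ℝ) ≤ b ^ 2 / 2 * eb by positivity)]
  have B3 : ec - 1 - c ≤ c ^ 2 / 2 * (ea * eb * ec) := by
    nlinarith [mul_le_mul_of_nonneg_left hab (show (0:ℝ) ≤ c ^ 2 / 2 * ec by positivity)]
  have B5 : (ea - 1) * (eb - 1) * ec ≤ a * b * (ea * eb * ec) := by
    have h1 : (ea - 1) * (eb - 1) ≤ (a * ea) * (b * eb) :=
      mul_le_mul l1 l2 (by linarith) (by positivity)
    nlinarith [mul_le_mul_of_nonneg_right h1 pc.le]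
  have B6 : (ea - 1) * (ec - 1) ≤ a * c * (ea * eb * ec) := by
    have h1 : (ea - 1) * (ec - 1) ≤ (a * ea) * (c * ec) :=
      mul_le_mul l1 l3 (by linarith) (by positivity)
    nlinarith [mul_le_mul_of_nonneg_left p2
      (show (0:ℝ) ≤ a * c * (ea * ec) by positivity)]
  have B7 : (eb - 1) * (ec - 1) ≤ b * c * (ea * eb * ec) := by
    have h1 : (eb - 1) * (ec - 1) ≤ (b * eb) * (c * ec) :=
      mul_le_mul l2 l3 (by linarith) (by positivity)
    nlinarith [mul_le_mul_of_nonneg_left p1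
      (show (0:ℝ) ≤ b * c * (eb * ec) by positivity)]
  rw [hes] at q4 ⊢
  nlinarith [B1, B2, B3, B5, B6, B7]

lemma step_bound (x y z : 𝔸) :
    ‖exp x * exp y * exp z - exp (x + y + z)‖ ≤
      (‖x‖ + ‖y‖ + ‖z‖) ^ 2 * Real.exp (‖x‖ + ‖y‖ + ‖z‖) := by
  set a := ‖x‖ with ha
  set b := ‖y‖ with hb
  set c := ‖z‖ with hc
  have ha0 : 0 ≤ a := norm_nonneg x
  have hb0 : 0 ≤ b := norm_nonneg y
  have hc0 : 0 ≤ c := norm_nonneg z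
  set s : ℝ := a + b + c with hs
  have hes : Real.exp s = Real.exp a * Real.exp b * Real.exp c := by
    rw [hs, Real.exp_add, Real.exp_add]
  have key : exp x * exp y * exp z - exp (x + y + z) =
      (exp x - 1 - x) + (exp y - 1 - y) + (exp z - 1 - z)
        - (exp (x + y + z) - 1 - (x + y + z))
        + (exp x - 1) * (exp y - 1) * exp z
        + (exp x - 1) * (exp z - 1)
        + (exp y - 1) * (exp z - 1) :=
    ring_identity _ _ _ _ x y z
  rw [key]
  have e1 : ‖exp x - 1 - x‖ ≤ Real.exp a - 1 - a := norm_exp_sub_one_sub_le x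
  have e2 : ‖exp y - 1 - y‖ ≤ Real.exp b - 1 - b := norm_exp_sub_one_sub_le y
  have e3 : ‖exp z - 1 - z‖ ≤ Real.exp c - 1 - c := norm_exp_sub_one_sub_le z
  have e4 : ‖exp (x + y + z) - 1 - (x + y + z)‖ ≤ Real.exp s - 1 - s := by
    refine (norm_exp_sub_one_sub_le _).trans ?_
    refine exp_sub_one_sub_mono (norm_nonneg _) ?_
    calc ‖x + y + z‖ ≤ ‖x + y‖ + ‖z‖ := norm_add_le _ _
      _ ≤ a + b + c := by
          have := norm_add_le x y
          rw [← ha, ← hb] at this; linarith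
  have e5 : ‖(exp x - 1) * (exp y - 1) * exp z‖ ≤
      (Real.exp a - 1) * (Real.exp b - 1) * Real.exp c := by
    refine (norm_mul_exp_le _ z).trans ?_
    have h1 : ‖(exp x - 1) * (exp y - 1)‖ ≤ (Real.exp a - 1) * (Real.exp b - 1) := by
      refine (norm_mul_le _ _).trans ?_
      have hx1 := norm_exp_sub_one_le x
      have hy1 := norm_exp_sub_one_le y
      exact mul_le_mul hx1 hy1 (norm_nonneg _) (by nlinarith [Real.one_le_exp ha0])
    exact mul_le_mul_of_nonneg_right h1 (Real.exp_pos _).le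
  have e6 : ‖(exp x - 1) * (exp z - 1)‖ ≤ (Real.exp a - 1) * (Real.exp c - 1) := by
    refine (norm_mul_le _ _).trans ?_
    exact mul_le_mul (norm_exp_sub_one_le x) (norm_exp_sub_one_le z) (norm_nonneg _)
      (by nlinarith [Real.one_le_exp ha0])
  have e7 : ‖(exp y - 1) * (exp z - 1)‖ ≤ (Real.exp b - 1) * (Real.exp c - 1) := by
    refine (norm_mul_le _ _).trans ?_
    exact mul_le_mul (norm_exp_sub_one_le y) (norm_exp_sub_one_le z) (norm_nonneg _)
      (by nlinarith [Real.one_le_exp hb0])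
  have tri : ‖(exp x - 1 - x) + (exp y - 1 - y) + (exp z - 1 - z)
        - (exp (x + y + z) - 1 - (x + y + z))
        + (exp x - 1) * (exp y - 1) * exp z
        + (exp x - 1) * (exp z - 1)
        + (exp y - 1) * (exp z - 1)‖ ≤
      (Real.exp a - 1 - a) + (Real.exp b - 1 - b) + (Real.exp c - 1 - c)
        + (Real.exp s - 1 - s)
        + (Real.exp a - 1) * (Real.exp b - 1) * Real.exp c
        + (Real.exp a - 1) * (Real.exp c - 1)
        + (Real.exp b - 1) * (Real.exp c - 1) := by
    refine (norm_add_le _ _).trans ?_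
    refine add_le_add ?_ e7
    refine (norm_add_le _ _).trans ?_
    refine add_le_add ?_ e6
    refine (norm_add_le _ _).trans ?_
    refine add_le_add ?_ e5
    refine (norm_sub_le _ _).trans ?_
    refine add_le_add ?_ e4
    refine (norm_add_le _ _).trans ?_
    refine add_le_add ((norm_add_le _ _).trans (add_le_add e1 e2)) e3
  refine tri.trans ?_
  have hes' : Real.exp s = Real.exp a * Real.exp b * Real.exp c := hes
  have := real_step ha0 hb0 hc0 hes'
    (exp_quad_le a ha0) (exp_quad_le b hb0) (exp_quad_le c hc0)
    (by rw [← hs]; exact exp_quad_le s (by rw [hs]; positivity))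
    (exp_sub_one_le a ha0) (exp_sub_one_le b hb0) (exp_sub_one_le c hc0)
    (Real.one_le_exp ha0) (Real.one_le_exp hb0) (Real.one_le_exp hc0)
  rw [hs] at this ⊢
  linarith [this]

end ZeroCorrAux

open ZeroCorrAux in
/-- Zeroth-order corrector estimate for three layers:
`‖(exp(A1/n)·exp(A2/n)·exp(A3/n))^n − exp(A1 + A2 + A3)‖ ≤ a/n`
with `a = C²·e^{2C}` when each `‖Ai‖ ≤ C/3`. -/
theorem zeroth_order_corrector_three_layers {𝔸 : Type*} [NormedRing 𝔸]
    [NormedAlgebra ℂ 𝔸] [CompleteSpace 𝔸] (A1 A2 A3 : 𝔸) (C : ℝ)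
    (h1 : ‖A1‖ ≤ C / 3) (h2 : ‖A2‖ ≤ C / 3) (h3 : ‖A3‖ ≤ C / 3)
    (n : ℕ) (hn : 0 < n) :
    ‖(exp ((n : ℂ)⁻¹ • A1) * exp ((n : ℂ)⁻¹ • A2) * exp ((n : ℂ)⁻¹ • A3)) ^ n -
        exp (A1 + A2 + A3)‖ ≤ C ^ 2 * Real.exp (2 * C) / n := by
  obtain ⟨m, rfl⟩ : ∃ m, n = m + 1 := ⟨n - 1, (Nat.succ_pred_eq_of_pos hn).symm⟩
  have hC0 : 0 ≤ C := by linarith [norm_nonneg A1]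
  have hnR : (0:ℝ) < ((m + 1 : ℕ) : ℝ) := by positivity
  have hnc : ((m + 1 : ℕ) : ℂ) ≠ 0 := by
    exact Nat.cast_ne_zero.mpr (Nat.succ_ne_zero m)
  set u1 := ((m + 1 : ℕ) : ℂ)⁻¹ • A1 with hu1
  set u2 := ((m + 1 : ℕ) : ℂ)⁻¹ • A2 with hu2
  set u3 := ((m + 1 : ℕ) : ℂ)⁻¹ • A3 with hu3
  have hncoef : ‖(((m + 1 : ℕ) : ℂ))⁻¹‖ = (((m + 1 : ℕ) : ℝ))⁻¹ := by
    rw [norm_inv, Complex.norm_natCast]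
  have key_norm : ∀ (A : 𝔸), ‖A‖ ≤ C / 3 →
      ‖(((m + 1 : ℕ) : ℂ))⁻¹ • A‖ ≤ C / (3 * ((m + 1 : ℕ) : ℝ)) := by
    intro A hA
    rw [norm_smul, hncoef]
    calc (((m + 1 : ℕ) : ℝ))⁻¹ * ‖A‖ ≤ (((m + 1 : ℕ) : ℝ))⁻¹ * (C / 3) := by
          exact mul_le_mul_of_nonneg_left hA (by positivity)
      _ = C / (3 * ((m + 1 : ℕ) : ℝ)) := by rw [inv_mul_eq_div, div_div, mul_comm]
  have ha1 : ‖u1‖ ≤ C / (3 * ((m + 1 : ℕ) : ℝ)) := key_norm A1 h1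
  have ha2 : ‖u2‖ ≤ C / (3 * ((m + 1 : ℕ) : ℝ)) := key_norm A2 h2
  have ha3 : ‖u3‖ ≤ C / (3 * ((m + 1 : ℕ) : ℝ)) := key_norm A3 h3
  have hσ : ‖u1‖ + ‖u2‖ + ‖u3‖ ≤ C / ((m + 1 : ℕ) : ℝ) := by
    have : C / (3 * ((m + 1 : ℕ) : ℝ)) * 3 = C / ((m + 1 : ℕ) : ℝ) := by
      field_simp
    linarith
  set T := exp u1 * exp u2 * exp u3 with hT
  set u := u1 + u2 + u3 with hu
  have hunorm : ‖u‖ ≤ C / ((m + 1 : ℕ) : ℝ) := by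
    refine le_trans ?_ hσ
    calc ‖u1 + u2 + u3‖ ≤ ‖u1 + u2‖ + ‖u3‖ := norm_add_le _ _
      _ ≤ ‖u1‖ + ‖u2‖ + ‖u3‖ := by linarith [norm_add_le u1 u2]
  have hVn : (exp u) ^ (m + 1) = exp (A1 + A2 + A3) := by
    let _ : NormedAlgebra ℚ 𝔸 := .restrictScalars ℚ ℂ 𝔸
    rw [← exp_nsmul]
    congr 1
    rw [hu, hu1, hu2, hu3, ← smul_add, ← smul_add,
      ← Nat.cast_smul_eq_nsmul ℂ, smul_smul, mul_inv_cancel₀ hnc, one_smul]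
  set r := Real.exp (C / ((m + 1 : ℕ) : ℝ)) with hr
  have hr0 : (0:ℝ) < r := Real.exp_pos _
  have hr1 : (1:ℝ) ≤ r := Real.one_le_exp (by positivity)
  have hTw : ∀ w : 𝔸, ‖T * w‖ ≤ r * ‖w‖ := by
    intro w
    have hassoc : T * w = exp u1 * (exp u2 * (exp u3 * w)) := by
      rw [hT, mul_assoc, mul_assoc]
    rw [hassoc]
    have c3 : ‖exp u3 * w‖ ≤ Real.exp ‖u3‖ * ‖w‖ := norm_exp_mul_le u3 w
    have c2 : ‖exp u2 * (exp u3 * w)‖ ≤ Real.exp ‖u2‖ * (Real.exp ‖u3‖ * ‖w‖) :=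
      (norm_exp_mul_le u2 _).trans (mul_le_mul_of_nonneg_left c3 (Real.exp_pos _).le)
    have c1 : ‖exp u1 * (exp u2 * (exp u3 * w))‖ ≤
        Real.exp ‖u1‖ * (Real.exp ‖u2‖ * (Real.exp ‖u3‖ * ‖w‖)) :=
      (norm_exp_mul_le u1 _).trans (mul_le_mul_of_nonneg_left c2 (Real.exp_pos _).le)
    refine c1.trans ?_
    have heq : Real.exp ‖u1‖ * (Real.exp ‖u2‖ * (Real.exp ‖u3‖ * ‖w‖)) =
        Real.exp (‖u1‖ + ‖u2‖ + ‖u3‖) * ‖w‖ := by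
      rw [Real.exp_add, Real.exp_add]; ring
    rw [heq]
    exact mul_le_mul_of_nonneg_right (Real.exp_le_exp.2 hσ) (norm_nonneg w)
  have hTpow : ∀ (k : ℕ) (w : 𝔸), ‖T ^ k * w‖ ≤ r ^ k * ‖w‖ := by
    intro k
    induction k with
    | zero => intro w; simp
    | succ k ih =>
        intro w
        rw [pow_succ', mul_assoc]
        calc ‖T * (T ^ k * w)‖ ≤ r * ‖T ^ k * w‖ := hTw _
          _ ≤ r * (r ^ k * ‖w‖) := mul_le_mul_of_nonneg_left (ih w) hr0.le
          _ = r ^ (k + 1) * ‖w‖ := by ring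
  have hVr : ∀ w : 𝔸, ‖w * exp u‖ ≤ ‖w‖ * r := by
    intro w
    refine (norm_mul_exp_le w u).trans ?_
    exact mul_le_mul_of_nonneg_left (Real.exp_le_exp.2 hunorm) (norm_nonneg w)
  set δ := ‖T - exp u‖ with hδdef
  have tele : ∀ k : ℕ, ‖T ^ (k + 1) - (exp u) ^ (k + 1)‖ ≤ ((k : ℝ) + 1) * r ^ k * δ := by
    intro k
    induction k with
    | zero => simp [hδdef]
    | succ k ih =>
        have hsplit : T ^ (k + 2) - (exp u) ^ (k + 2) =
            T ^ (k + 1) * (T - exp u) + (T ^ (k + 1) - (exp u) ^ (k + 1)) * exp u := by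
          rw [pow_succ T (k + 1), pow_succ (exp u) (k + 1)]
          noncomm_ring
        rw [show k + 1 + 1 = k + 2 from rfl, hsplit]
        calc ‖T ^ (k + 1) * (T - exp u) + (T ^ (k + 1) - (exp u) ^ (k + 1)) * exp u‖
            ≤ ‖T ^ (k + 1) * (T - exp u)‖ + ‖(T ^ (k + 1) - (exp u) ^ (k + 1)) * exp u‖ :=
              norm_add_le _ _
          _ ≤ r ^ (k + 1) * δ + (((k : ℝ) + 1) * r ^ k * δ) * r := by
              refine add_le_add (hTpow (k + 1) _) ?_
              refine (hVr _).trans ?_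
              exact mul_le_mul_of_nonneg_right ih hr0.le
          _ = (((k + 1 : ℕ) : ℝ) + 1) * r ^ (k + 1) * δ := by push_cast; ring
  have hδ : δ ≤ (C / ((m + 1 : ℕ) : ℝ)) ^ 2 * r := by
    have h := step_bound u1 u2 u3
    refine le_trans h ?_
    have hσ0 : (0:ℝ) ≤ ‖u1‖ + ‖u2‖ + ‖u3‖ := by positivity
    refine mul_le_mul (by nlinarith) (Real.exp_le_exp.2 hσ) (Real.exp_pos _).le (by positivity)
  have main := tele m
  rw [hVn] at main
  have hrpow : r ^ m * r = Real.exp C := by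
    rw [← pow_succ, hr, ← Real.exp_nat_mul]
    congr 1
    field_simp
  calc ‖T ^ (m + 1) - exp (A1 + A2 + A3)‖ ≤ ((m : ℝ) + 1) * r ^ m * δ := main
    _ ≤ ((m : ℝ) + 1) * r ^ m * ((C / ((m + 1 : ℕ) : ℝ)) ^ 2 * r) := by
        refine mul_le_mul_of_nonneg_left hδ (by positivity)
    _ = C ^ 2 * (r ^ m * r) / ((m + 1 : ℕ) : ℝ) := by
        push_cast
        field_simp
    _ = C ^ 2 * Real.exp C / ((m + 1 : ℕ) : ℝ) := by rw [hrpow]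
    _ ≤ C ^ 2 * Real.exp (2 * C) / ((m + 1 : ℕ) : ℝ) := by
        have hE : Real.exp C ≤ Real.exp (2 * C) := Real.exp_le_exp.2 (by linarith)
        rw [div_le_div_iff_of_pos_right hnR]
        exact mul_le_mul_of_nonneg_left hE (sq_nonneg C)
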